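/- In a recollement (T', T, T''), let J'' be an ideal of T''. Then ^⊥(j_* J'') = { α a morphism of T | j^*(α) ∈ ^⊥J'' }, where left orthogonals are taken with respect to phantom ideals of the class of all triangles, assuming j^* preserves phantoms and j_* preserves phantoms. -/
import Mathlib


open CategoryTheory Category Limits Pretriangulated

/-- A class of morphisms in a category. -/
abbrev MorphismClass (C : Type*) [Category C] := ∀ ⦃X Y : C⦄, (X ⟶ Y) → Prop

/-- An ideal of a preadditive category: an additive subgroup of each Hom-group, closed
under arbitrary pre- and post-composition. -/
structure CatIdeal (C : Type*) [Category C] [Preadditive C] where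
  mem : MorphismClass C
  zero_mem : ∀ (X Y : C), mem (0 : X ⟶ Y)
  neg_mem : ∀ ⦃X Y : C⦄ ⦃f : X ⟶ Y⦄, mem f → mem (-f)
  add_mem : ∀ ⦃X Y : C⦄ ⦃f g : X ⟶ Y⦄, mem f → mem g → mem (f + g)
  comp_mem : ∀ ⦃W X Y Z : C⦄ (h : W ⟶ X) ⦃f : X ⟶ Y⦄ (k : Y ⟶ Z),
    mem f → mem (h ≫ f ≫ k)

/-- The image ideal `F(I)`: all morphisms of the form `g ≫ F(α) ≫ h` with `α ∈ I`. -/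
def imageMem {C D : Type*} [Category C] [Category D] (F : C ⥤ D)
    (I : MorphismClass C) : MorphismClass D :=
  fun A B f => ∃ (X Y : C) (α : X ⟶ Y) (g : A ⟶ F.obj X) (h : F.obj Y ⟶ B),
    I α ∧ f = g ≫ F.map α ≫ h

/-- The right orthogonal of `I` with respect to the phantom ideal `Φ`:
`β : A ⟶ B` lies in `I^⊥` iff `α ≫ φ ≫ β⟦1⟧ = 0` for all `α ∈ I` and all `φ ∈ Φ`. -/
def rOrth {C : Type*} [Category C] [Preadditive C] [HasShift C ℤ]
    (Φ I : MorphismClass C) : MorphismClass C :=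
  fun A B β => ∀ ⦃X Y : C⦄ (α : X ⟶ Y), I α → ∀ (φ : Y ⟶ A⟦(1 : ℤ)⟧), Φ φ →
    α ≫ φ ≫ β⟦(1 : ℤ)⟧' = 0

/-- The left orthogonal of `J` with respect to the phantom ideal `Φ`:
`α : X ⟶ Y` lies in `^⊥J` iff `α ≫ φ ≫ β⟦1⟧ = 0` for all `β ∈ J` and all `φ ∈ Φ`. -/
def lOrth {C : Type*} [Category C] [Preadditive C] [HasShift C ℤ]
    (Φ J : MorphismClass C) : MorphismClass C :=
  fun X Y α => ∀ ⦃A B : C⦄ (β : A ⟶ B), J β → ∀ (φ : Y ⟶ A⟦(1 : ℤ)⟧), Φ φ →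
    α ≫ φ ≫ β⟦(1 : ℤ)⟧' = 0

/-- The class of all morphisms. -/
def allMor (C : Type*) [Category C] : MorphismClass C := fun _ _ _ => True

/-- In a recollement, `^⊥(j_* J'') = {α | j^*(α) ∈ ^⊥J''}`, where left orthogonals are
taken with respect to phantom ideals `Φ`, `Φ''` preserved by `j^*` and `j_*`. -/
theorem stmt11
    {T' T T'' : Type*} [Category T'] [Category T] [Category T'']
    [HasZeroObject T'] [HasZeroObject T] [HasZeroObject T'']
    [Preadditive T'] [Preadditive T] [Preadditive T'']
    [HasShift T' ℤ] [HasShift T ℤ] [HasShift T'' ℤ]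
    [∀ n : ℤ, (shiftFunctor T' n).Additive] [∀ n : ℤ, (shiftFunctor T n).Additive]
    [∀ n : ℤ, (shiftFunctor T'' n).Additive]
    [Pretriangulated T'] [Pretriangulated T] [Pretriangulated T'']
    (iStar : T' ⥤ T) (iUpper : T ⥤ T') (iShriek : T ⥤ T')
    (jShriek : T'' ⥤ T) (jUpper : T ⥤ T'') (jStar : T'' ⥤ T)
    (adj₁ : iUpper ⊣ iStar) (adj₂ : iStar ⊣ iShriek)
    (adj₃ : jShriek ⊣ jUpper) (adj₄ : jUpper ⊣ jStar)
    (hiFF : iStar.FullyFaithful) (hj₁FF : jShriek.FullyFaithful)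
    (hj₂FF : jStar.FullyFaithful)
    (hz : ∀ X : T', IsZero (jUpper.obj (iStar.obj X)))
    (htri₁ : ∀ X : T,
      ∃ δ : iStar.obj (iUpper.obj X) ⟶ (jShriek.obj (jUpper.obj X))⟦(1 : ℤ)⟧,
        Triangle.mk (adj₃.counit.app X) (adj₁.unit.app X) δ ∈ distTriang T)
    (htri₂ : ∀ X : T,
      ∃ δ : jStar.obj (jUpper.obj X) ⟶ (iStar.obj (iShriek.obj X))⟦(1 : ℤ)⟧,
        Triangle.mk (adj₂.counit.app X) (adj₄.unit.app X) δ ∈ distTriang T)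
    [jUpper.CommShift ℤ] [jStar.CommShift ℤ]
    (J'' : CatIdeal T'') (Φ : CatIdeal T) (Φ'' : CatIdeal T'')
    (hΦ₁ : ∀ ⦃X Y : T⦄ (f : X ⟶ Y), Φ.mem f → Φ''.mem (jUpper.map f))
    (hΦ₂ : ∀ ⦃X Y : T''⦄ (f : X ⟶ Y), Φ''.mem f → Φ.mem (jStar.map f)) :
    ∀ ⦃X Y : T⦄ (α : X ⟶ Y),
      lOrth Φ.mem (imageMem jStar J''.mem) α ↔ lOrth Φ''.mem J''.mem (jUpper.map α) := by
  have _ : jStar.IsRightAdjoint := adj₄.isRightAdjoint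
  have _ : jUpper.IsRightAdjoint := adj₃.isRightAdjoint
  intro X Y α
  constructor
  · -- forward
    intro h A B β hβ φ hφ
    set iso := jStar.commShiftIso (1 : ℤ) with hiso
    set ψ : Y ⟶ (jStar.obj A)⟦(1 : ℤ)⟧ :=
      adj₄.unit.app Y ≫ jStar.map φ ≫ iso.hom.app A with hψdef
    have hψ : Φ.mem ψ := Φ.comp_mem (adj₄.unit.app Y) (iso.hom.app A) (hΦ₂ φ hφ)
    have h0 : α ≫ ψ ≫ (jStar.map β)⟦(1 : ℤ)⟧' = 0 :=
      h (jStar.map β) ⟨A, B, β, 𝟙 _, 𝟙 _, hβ, by simp⟩ ψ hψ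
    apply (adj₄.homEquiv X ((shiftFunctor T'' (1 : ℤ)).obj B)).injective
    have hz0 : (adj₄.homEquiv X ((shiftFunctor T'' (1 : ℤ)).obj B)) 0 = 0 := by
      rw [Adjunction.homEquiv_unit, Functor.map_zero, comp_zero]
    rw [hz0, Adjunction.homEquiv_unit]
    have hnat : jStar.map (β⟦(1 : ℤ)⟧') =
        iso.hom.app A ≫ (jStar.map β)⟦(1 : ℤ)⟧' ≫ iso.inv.app B := by
      rw [hiso, ← cancel_mono ((jStar.commShiftIso (1 : ℤ)).hom.app B)]
      simp
    rw [Functor.map_comp, Functor.map_comp, hnat]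
    have hu := adj₄.unit.naturality α
    dsimp at hu
    slice_lhs 1 2 => rw [← hu]
    have := reassoc_of% h0
    simp only [hψdef, assoc] at this ⊢
    rw [this]
    simp
  · -- backward
    intro h A B f hf φ hφ
    obtain ⟨X'', Y'', β, g, k, hβ, rfl⟩ := hf
    set iso := jStar.commShiftIso (1 : ℤ) with hiso
    set ψ : Y ⟶ jStar.obj ((shiftFunctor T'' (1 : ℤ)).obj X'') :=
      φ ≫ g⟦(1 : ℤ)⟧' ≫ iso.inv.app X'' with hψdef
    set ψb : jUpper.obj Y ⟶ (shiftFunctor T'' (1 : ℤ)).obj X'' :=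
      jUpper.map ψ ≫ adj₄.counit.app _ with hψbdef
    have hψb : Φ''.mem ψb := by
      have : ψb = 𝟙 _ ≫ jUpper.map φ ≫
          (jUpper.map (g⟦(1 : ℤ)⟧' ≫ iso.inv.app X'') ≫ adj₄.counit.app _) := by
        simp [hψbdef, hψdef]
      rw [this]
      exact Φ''.comp_mem _ _ (hΦ₁ φ hφ)
    have h0 : jUpper.map α ≫ ψb ≫ β⟦(1 : ℤ)⟧' = 0 := h β hβ ψb hψb
    have hψeq : ψ = adj₄.unit.app Y ≫ jStar.map ψb := by
      have := (adj₄.homEquiv Y ((shiftFunctor T'' (1 : ℤ)).obj X'')).apply_symm_apply ψ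
      rw [Adjunction.homEquiv_counit, Adjunction.homEquiv_unit] at this
      rw [← this, hψbdef]
    have key : α ≫ ψ ≫ jStar.map (β⟦(1 : ℤ)⟧') = 0 := by
      rw [hψeq]
      have hu := adj₄.unit.naturality α
      dsimp at hu
      slice_lhs 1 2 => rw [hu]
      simp only [assoc, ← Functor.map_comp]
      rw [h0, Functor.map_zero, comp_zero]
    have hnat : (jStar.map β)⟦(1 : ℤ)⟧' =
        iso.inv.app X'' ≫ jStar.map (β⟦(1 : ℤ)⟧') ≫ iso.hom.app Y'' := by
      rw [hiso, ← cancel_epi ((jStar.commShiftIso (1 : ℤ)).hom.app X'')]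
      simp
    rw [Functor.map_comp, Functor.map_comp, hnat]
    have := reassoc_of% key
    simp only [hψdef, assoc] at this ⊢
    rw [this]
    simp
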